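/- If the penalty function Φ_{c_0} is coercive on A for some c_0 > 0, then for every c ≥ c_0, every y ∈ ℝ^d and every subgradient tuple V at y the convex function Q_c(·, y, V) attains a global minimum on the set A. -/

import Mathlib

open RealInnerProductSpace Finset Filter Topology

noncomputable section

/-- Euclidean space `ℝ^d`. -/
abbrev Euc (d : ℕ) := EuclideanSpace ℝ (Fin d)

/-- The (convex-analysis) subdifferential of `f` at `y`. -/
def subdiff {d : ℕ} (f : Euc d → ℝ) (y : Euc d) : Set (Euc d) :=
  {v | ∀ x, f y + ⟪v, x - y⟫ ≤ f x}

/-- The normal cone to `A` at `x`. -/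
def normalCone {d : ℕ} (A : Set (Euc d)) (x : Euc d) : Set (Euc d) :=
  {v | ∀ y ∈ A, ⟪v, y - x⟫ ≤ 0}

/-- A subgradient tuple `V = (v₀, vᵢ (i ∈ I), vⱼ, wⱼ (j ∈ E))` at the point `y`:
`v_k ∈ ∂h_k(y)` for `k ∈ {0} ∪ I ∪ E` and `w_j ∈ ∂g_j(y)` for `j ∈ E`. -/
structure SubgradTuple {d l p : ℕ} (h0 : Euc d → ℝ) (hI : Fin l → Euc d → ℝ)
    (gE hE : Fin p → Euc d → ℝ) (y : Euc d) : Type where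
  v0 : Euc d
  vI : Fin l → Euc d
  vE : Fin p → Euc d
  wE : Fin p → Euc d
  v0_mem : v0 ∈ subdiff h0 y
  vI_mem : ∀ i, vI i ∈ subdiff (hI i) y
  vE_mem : ∀ j, vE j ∈ subdiff (hE j) y
  wE_mem : ∀ j, wE j ∈ subdiff (gE j) y

variable {d l p : ℕ}

/-- The linearised infeasibility measure `Γ(x, y, V)`. -/
def Gam (gI : Fin l → Euc d → ℝ) {h0 : Euc d → ℝ} {hI : Fin l → Euc d → ℝ}
    {gE hE : Fin p → Euc d → ℝ} {y : Euc d}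
    (V : SubgradTuple h0 hI gE hE y) (x : Euc d) : ℝ :=
  (∑ i, max (gI i x - hI i y - ⟪V.vI i, x - y⟫) 0)
  + ∑ j, max (gE j x - hE j y - ⟪V.vE j, x - y⟫)
      (hE j x - gE j y - ⟪V.wE j, x - y⟫)

/-- The convex majorant `Q_c(x, y, V)` of the penalty function. -/
def Qfun (g0 : Euc d → ℝ) (gI : Fin l → Euc d → ℝ) {h0 : Euc d → ℝ}
    {hI : Fin l → Euc d → ℝ} {gE hE : Fin p → Euc d → ℝ} {y : Euc d}
    (V : SubgradTuple h0 hI gE hE y) (c : ℝ) (x : Euc d) : ℝ :=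
  g0 x - ⟪V.v0, x - y⟫ + c * Gam gI V x

/-- The ℓ1 penalty term `φ`. -/
def phi (gI hI : Fin l → Euc d → ℝ) (gE hE : Fin p → Euc d → ℝ) (x : Euc d) : ℝ :=
  (∑ i, max (gI i x - hI i x) 0) + ∑ j, |gE j x - hE j x|

/-- The ℓ1 penalty function `Φ_c = f₀ + c φ`. -/
def Phi (g0 h0 : Euc d → ℝ) (gI hI : Fin l → Euc d → ℝ) (gE hE : Fin p → Euc d → ℝ)
    (c : ℝ) (x : Euc d) : ℝ :=
  (g0 x - h0 x) + c * phi gI hI gE hE x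

/-- Feasibility for the problem (P). -/
def Feasible (A : Set (Euc d)) (gI hI : Fin l → Euc d → ℝ)
    (gE hE : Fin p → Euc d → ℝ) (x : Euc d) : Prop :=
  x ∈ A ∧ (∀ i, gI i x - hI i x ≤ 0) ∧ (∀ j, gE j x - hE j x = 0)

/-- Criticality for the problem (P) (Definition 1). -/
def IsCritical (A : Set (Euc d)) (g0 h0 : Euc d → ℝ) (gI hI : Fin l → Euc d → ℝ)
    (gE hE : Fin p → Euc d → ℝ) (x : Euc d) : Prop :=
  ∃ V : SubgradTuple h0 hI gE hE x, ∃ lam : Fin l → ℝ, ∃ mu1 mu2 : Fin p → ℝ,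
    (∀ i, 0 ≤ lam i) ∧ (∀ j, 0 ≤ mu1 j) ∧ (∀ j, 0 ≤ mu2 j) ∧
    (∀ i, lam i * (gI i x - hI i x) = 0) ∧
    ∃ u0 ∈ subdiff g0 x, ∃ uI : Fin l → Euc d, (∀ i, uI i ∈ subdiff (gI i) x) ∧
    ∃ uE : Fin p → Euc d, (∀ j, uE j ∈ subdiff (gE j) x) ∧
    ∃ zE : Fin p → Euc d, (∀ j, zE j ∈ subdiff (hE j) x) ∧
    ∃ ν ∈ normalCone A x,
      (0 : Euc d) = (u0 - V.v0) + (∑ i, lam i • (uI i - V.vI i))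
        + (∑ j, mu1 j • (uE j - V.vE j)) - (∑ j, mu2 j • (V.wE j - zE j)) + ν

/-- Generalised criticality for the penalty parameter `c`. -/
def IsGenCritical (A : Set (Euc d)) (g0 h0 : Euc d → ℝ) (gI hI : Fin l → Euc d → ℝ)
    (gE hE : Fin p → Euc d → ℝ) (c : ℝ) (x : Euc d) : Prop :=
  x ∈ A ∧ ∃ V : SubgradTuple h0 hI gE hE x, ∀ z ∈ A, Qfun g0 gI V c x ≤ Qfun g0 gI V c z

/-- Criticality for the penalty term `φ`. -/
def IsCriticalPen (A : Set (Euc d)) (h0 : Euc d → ℝ) (gI hI : Fin l → Euc d → ℝ)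
    (gE hE : Fin p → Euc d → ℝ) (x : Euc d) : Prop :=
  x ∈ A ∧ ∃ V : SubgradTuple h0 hI gE hE x, ∀ z ∈ A, Gam gI V x ≤ Gam gI V z

/-- `F` is coercive on `A`. -/
def CoerciveOn {d : ℕ} (F : Euc d → ℝ) (A : Set (Euc d)) : Prop :=
  ∀ u : ℕ → Euc d, (∀ n, u n ∈ A) → Tendsto (fun n => ‖u n‖) atTop atTop →
    Tendsto (fun n => F (u n)) atTop atTop


private lemma Q_cont {d l p : ℕ} (g0 h0 : Euc d → ℝ)
    (gI hI : Fin l → Euc d → ℝ) (gE hE : Fin p → Euc d → ℝ)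
    (hg0 : ConvexOn ℝ Set.univ g0)
    (hgI : ∀ i, ConvexOn ℝ Set.univ (gI i))
    (hgE : ∀ j, ConvexOn ℝ Set.univ (gE j)) (hhE : ∀ j, ConvexOn ℝ Set.univ (hE j))
    (c : ℝ) (y : Euc d) (V : SubgradTuple h0 hI gE hE y) :
    Continuous (Qfun g0 gI V c) := by
  have cont : ∀ f : Euc d → ℝ, ConvexOn ℝ Set.univ f → Continuous f := fun f hf => by
    rw [← continuousOn_univ]
    exact hf.continuousOn isOpen_univ
  have hinner : ∀ v : Euc d, Continuous fun x : Euc d => ⟪v, x - y⟫ :=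
    fun v => (continuous_const.inner (continuous_id.sub continuous_const) : _)
  have hGam : Continuous (Gam gI V) := by
    unfold Gam
    apply Continuous.add
    · apply continuous_finset_sum
      intro i _
      exact (((cont _ (hgI i)).sub continuous_const).sub (hinner _)).max continuous_const
    · apply continuous_finset_sum
      intro j _
      exact (((cont _ (hgE j)).sub continuous_const).sub (hinner _)).max
        (((cont _ (hhE j)).sub continuous_const).sub (hinner _))
  exact ((cont _ hg0).sub (hinner _)).add (continuous_const.mul hGam)

private lemma Q_lb {d l p : ℕ} (g0 h0 : Euc d → ℝ)
    (gI hI : Fin l → Euc d → ℝ) (gE hE : Fin p → Euc d → ℝ)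
    (c0 : ℝ) (hc0 : 0 < c0) (c : ℝ) (hc : c0 ≤ c)
    (y : Euc d) (V : SubgradTuple h0 hI gE hE y) (x : Euc d) :
    Phi g0 h0 gI hI gE hE c0 x + h0 y ≤ Qfun g0 gI V c x := by
  have hsub : ∀ (f : Euc d → ℝ) (v : Euc d), v ∈ subdiff f y → ⟪v, x - y⟫ ≤ f x - f y := by
    intro f v hv
    have := hv x
    linarith
  have hphi_nonneg : 0 ≤ phi gI hI gE hE x := by
    unfold phi
    have h1 : (0:ℝ) ≤ ∑ i, max (gI i x - hI i x) 0 :=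
      Finset.sum_nonneg fun i _ => le_max_right _ _
    have h2 : (0:ℝ) ≤ ∑ j, |gE j x - hE j x| :=
      Finset.sum_nonneg fun j _ => abs_nonneg _
    linarith
  have hGam : phi gI hI gE hE x ≤ Gam gI V x := by
    unfold phi Gam
    apply add_le_add
    · apply Finset.sum_le_sum
      intro i _
      apply max_le_max _ le_rfl
      have := hsub _ _ (V.vI_mem i) 
      linarith
    · apply Finset.sum_le_sum
      intro j _
      rw [abs_eq_max_neg]
      apply max_le_max
      · have := hsub _ _ (V.vE_mem j); linarith
      · have := hsub _ _ (V.wE_mem j); linarith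
  have hGam0 : 0 ≤ Gam gI V x := le_trans hphi_nonneg hGam
  have h0' : ⟪V.v0, x - y⟫ ≤ h0 x - h0 y := hsub _ _ V.v0_mem
  have hcG : c0 * phi gI hI gE hE x ≤ c * Gam gI V x := by
    calc c0 * phi gI hI gE hE x ≤ c0 * Gam gI V x :=
          mul_le_mul_of_nonneg_left hGam hc0.le
      _ ≤ c * Gam gI V x := mul_le_mul_of_nonneg_right hc hGam0
  unfold Phi Qfun
  linarith

theorem stmt4 {d l p : ℕ} (A : Set (Euc d)) (g0 h0 : Euc d → ℝ)
    (gI hI : Fin l → Euc d → ℝ) (gE hE : Fin p → Euc d → ℝ)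
    (hA : Convex ℝ A) (hAcl : IsClosed A) (hAne : A.Nonempty)
    (hg0 : ConvexOn ℝ Set.univ g0) (hh0 : ConvexOn ℝ Set.univ h0)
    (hgI : ∀ i, ConvexOn ℝ Set.univ (gI i)) (hhI : ∀ i, ConvexOn ℝ Set.univ (hI i))
    (hgE : ∀ j, ConvexOn ℝ Set.univ (gE j)) (hhE : ∀ j, ConvexOn ℝ Set.univ (hE j))
    (c0 : ℝ) (hc0 : 0 < c0) (hcoer : CoerciveOn (Phi g0 h0 gI hI gE hE c0) A)
    (c : ℝ) (hc : c0 ≤ c) (y : Euc d) (V : SubgradTuple h0 hI gE hE y) :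
    ∃ xs ∈ A, ∀ z ∈ A, Qfun g0 gI V c xs ≤ Qfun g0 gI V c z := by
  obtain ⟨x0, hx0⟩ := hAne
  set Q := Qfun g0 gI V c with hQdef
  have hQcont : Continuous Q := Q_cont g0 h0 gI hI gE hE hg0 hgI hgE hhE c y V
  set S : Set (Euc d) := {x ∈ A | Q x ≤ Q x0} with hSdef
  have hSne : x0 ∈ S := ⟨hx0, le_rfl⟩
  have hScl : IsClosed S := hAcl.inter (isClosed_le hQcont continuous_const)
  have hSbd : Bornology.IsBounded S := by
    by_contra hbd
    have : ∀ n : ℕ, ∃ x ∈ S, (n : ℝ) ≤ ‖x‖ := by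
      intro n
      by_contra h
      push_neg at h
      exact hbd (isBounded_iff_forall_norm_le.2 ⟨n, fun x hx => (h x hx).le⟩)
    choose u hu hun using this
    have hnorm : Tendsto (fun n => ‖u n‖) atTop atTop :=
      tendsto_atTop_mono hun tendsto_natCast_atTop_atTop
    have hten := hcoer u (fun n => (hu n).1) hnorm
    obtain ⟨n, hn⟩ := (hten.eventually (eventually_gt_atTop (Q x0 - h0 y))).exists
    have := Q_lb g0 h0 gI hI gE hE c0 hc0 c hc y V (u n)
    have := (hu n).2
    simp only [hQdef] at *
    linarith
  have hScomp : IsCompact S := Metric.isCompact_of_isClosed_isBounded hScl hSbd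
  obtain ⟨xs, hxs, hmin⟩ := hScomp.exists_isMinOn ⟨x0, hSne⟩ hQcont.continuousOn
  refine ⟨xs, hxs.1, fun z hz => ?_⟩
  by_cases hzS : Q z ≤ Q x0
  · exact hmin ⟨hz, hzS⟩
  · exact le_trans (hmin hSne) (le_of_not_ge hzS)
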